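/- arXiv:2601.17521 — 2 statements merged into one kernel-verified Lean document; each statement's English description precedes it below -/
import Mathlib

section
/- Let A be a finite nonempty alphabet and let Z be an infinite set of positions over A. If ∑'_{p ∈ Z} (1/|A|)^{⌊len(p)/2⌋} ≤ 1, then Player 2 has a winning strategy for Z. -/
open scoped ENNReal

variable {A : Type*}

/-- A position `p` is a prefix of the play `x`. -/
def PrefixOfPlay (p : List A) (x : ℕ → A) : Prop :=
  List.ofFn (fun i : Fin p.length => x i) = p

/-- The play `x` is consistent with the Player 1 strategy `s₁`. -/
def Consistent1 (s₁ : List A → A) (x : ℕ → A) : Prop :=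
  ∀ n : ℕ, x (2 * n) = s₁ (List.ofFn (fun i : Fin (2 * n) => x i))

/-- The play `x` is consistent with the Player 2 strategy `s₂`. -/
def Consistent2 (s₂ : List A → A) (x : ℕ → A) : Prop :=
  ∀ n : ℕ, x (2 * n + 1) = s₂ (List.ofFn (fun i : Fin (2 * n + 1) => x i))

/-- Player 1 has a winning strategy for the open set determined by `Z`. -/
def P1Wins (Z : Set (List A)) : Prop :=
  ∃ s₁ : List A → A, ∀ x : ℕ → A, Consistent1 s₁ x → ∃ p ∈ Z, PrefixOfPlay p x

/-- Player 2 has a winning strategy for the open set determined by `Z`. -/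
def P2Wins (Z : Set (List A)) : Prop :=
  ∃ s₂ : List A → A, ∀ x : ℕ → A, Consistent2 s₂ x → ¬ ∃ p ∈ Z, PrefixOfPlay p x

section Aux

open scoped Classical

set_option linter.unusedSectionVars false

variable [Fintype A] [Nonempty A]

/-- The basic weight `1/|A|`. -/
noncomputable def rr (A : Type*) [Fintype A] : ℝ≥0∞ := 1 / Fintype.card A

lemma card_ne_zero' : (Fintype.card A : ℝ≥0∞) ≠ 0 := by
  simp [Fintype.card_ne_zero]

lemma card_ne_top' : (Fintype.card A : ℝ≥0∞) ≠ ⊤ := by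
  simp

lemma rr_ne_zero : rr A ≠ 0 := by
  simp [rr, ENNReal.div_eq_zero_iff, card_ne_top']

lemma card_mul_rr : (Fintype.card A : ℝ≥0∞) * rr A = 1 := by
  rw [rr, ENNReal.mul_div_cancel' (fun h => absurd h card_ne_zero') (fun h => absurd h card_ne_top')]

/-- Weight of position `p` seen from current position `q`. -/
noncomputable def F (Z : Set (List A)) (q : List A) (p : Z) : ℝ≥0∞ :=
  if q <+: (p : List A) ∨ (p : List A) <+: q then
    rr A ^ ((p : List A).length / 2 - q.length / 2) else 0

/-- Potential of position `q`. -/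
noncomputable def Phi (Z : Set (List A)) (q : List A) : ℝ≥0∞ := ∑' p : Z, F Z q p

/-- Extensions of `q` in `Z`. -/
def PExt (Z : Set (List A)) (q : List A) : Set (List A) := {p | p ∈ Z ∧ q <+: p}

/-- The invariant maintained by Player 2. -/
def PInv (Z : Set (List A)) (q : List A) : Prop :=
  Phi Z q ≤ 1 ∧ (Phi Z q = 1 → (PExt Z q).Infinite)

lemma prefixes_finite (q : List A) : {p : List A | p <+: q}.Finite := by
  apply Set.Finite.subset (Set.finite_range fun n : Fin (q.length + 1) => q.take n)
  intro p hp
  have h1 : p.length ≤ q.length := hp.length_le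
  exact ⟨⟨p.length, by omega⟩, ((List.prefix_iff_eq_take).mp hp).symm⟩

/-- Claim A : the invariant implies no element of `Z` is a prefix of `q`. -/
lemma no_loss {Z : Set (List A)} {q : List A} (hI : PInv Z q) :
    ∀ p ∈ Z, ¬ p <+: q := by
  rintro p hp hpre
  have hF : F Z q ⟨p, hp⟩ = 1 := by
    have hl : p.length ≤ q.length := hpre.length_le
    simp only [F, if_pos (Or.inr hpre)]
    have h0 : p.length / 2 - q.length / 2 = 0 := by omega
    rw [h0, pow_zero]
  have h1 : (1 : ℝ≥0∞) ≤ Phi Z q := by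
    rw [← hF]; exact ENNReal.le_tsum (⟨p, hp⟩ : Z)
  have hPhi : Phi Z q = 1 := le_antisymm hI.1 h1
  obtain ⟨p₁, hp₁, hne⟩ := ((hI.2 hPhi).diff (Set.finite_singleton p)).nonempty
  have hp₁Z : p₁ ∈ Z := hp₁.1
  have hne' : p₁ ≠ p := by simpa using hne
  have hF₁ : 0 < F Z q ⟨p₁, hp₁Z⟩ := by
    simp only [F, if_pos (Or.inl hp₁.2)]
    exact pos_iff_ne_zero.mpr (pow_ne_zero _ rr_ne_zero)
  have hne2 : (⟨p, hp⟩ : Z) ≠ ⟨p₁, hp₁Z⟩ := by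
    simp only [ne_eq, Subtype.mk.injEq]
    exact fun h => hne' h.symm
  have hsum : F Z q ⟨p, hp⟩ + F Z q ⟨p₁, hp₁Z⟩ ≤ Phi Z q := by
    calc F Z q ⟨p, hp⟩ + F Z q ⟨p₁, hp₁Z⟩
        = ∑ x ∈ ({⟨p, hp⟩, ⟨p₁, hp₁Z⟩} : Finset Z), F Z q x := (Finset.sum_pair hne2).symm
      _ ≤ Phi Z q := ENNReal.sum_le_tsum _
  rw [hF, hPhi] at hsum
  exact absurd hsum (not_le.mpr (ENNReal.lt_add_right ENNReal.one_ne_top (ne_of_gt hF₁)))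

lemma F_snoc_le_even {Z : Set (List A)} {q : List A} (hq : q.length % 2 = 0) (a : A)
    (p : Z) : F Z (q ++ [a]) p ≤ F Z q p := by
  simp only [F]
  split_ifs with h1 h2 h2
  · have hlen : (q ++ [a]).length = q.length + 1 := by simp
    rw [hlen]
    have heq : (p : List A).length / 2 - (q.length + 1) / 2
        = (p : List A).length / 2 - q.length / 2 := by omega
    rw [heq]
  · exfalso; apply h2
    rcases h1 with h | h
    · exact Or.inl ((q.prefix_append [a]).trans h)
    · rcases List.prefix_concat_iff.mp h with heq | h
      · exact Or.inl (heq ▸ q.prefix_append [a])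
      · exact Or.inr h
  · exact zero_le
  · exact le_rfl

/-- Claim B : Player 1's move preserves the invariant. -/
lemma inv_snoc_even {Z : Set (List A)} {q : List A} (hq : q.length % 2 = 0)
    (hI : PInv Z q) (a : A) : PInv Z (q ++ [a]) := by
  have hle : Phi Z (q ++ [a]) ≤ Phi Z q :=
    ENNReal.tsum_le_tsum (F_snoc_le_even hq a)
  refine ⟨hle.trans hI.1, fun h1 => ?_⟩
  have hPhi : Phi Z q = 1 := le_antisymm hI.1 (h1 ▸ hle)
  by_cases hall : ∀ p : Z, F Z (q ++ [a]) p = F Z q p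
  · have hExt : PExt Z q \ {p | p <+: q ++ [a]} ⊆ PExt Z (q ++ [a]) := by
      rintro p ⟨⟨hpZ, hpre⟩, hnp⟩
      refine ⟨hpZ, ?_⟩
      have hFq : F Z q ⟨p, hpZ⟩ ≠ 0 := by
        simp only [F, if_pos (Or.inl hpre)]
        exact pow_ne_zero _ rr_ne_zero
      have h2 : F Z (q ++ [a]) ⟨p, hpZ⟩ ≠ 0 := by rw [hall ⟨p, hpZ⟩]; exact hFq
      by_cases hc : q ++ [a] <+: p ∨ p <+: q ++ [a]
      · rcases hc with hc | hc
        · exact hc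
        · exact absurd hc hnp
      · exact absurd (by simp only [F, if_neg hc]) h2
    exact ((hI.2 hPhi).diff (prefixes_finite (q ++ [a]))).mono hExt
  · exfalso
    push_neg at hall
    obtain ⟨p, hne⟩ := hall
    have hlt : F Z (q ++ [a]) p < F Z q p := lt_of_le_of_ne (F_snoc_le_even hq a p) hne
    have hfi : (∑' p : Z, F Z (q ++ [a]) p) ≠ ⊤ := by
      show Phi Z (q ++ [a]) ≠ ⊤
      rw [h1]; exact ENNReal.one_ne_top
    have hslt : Phi Z (q ++ [a]) < Phi Z q :=
      ENNReal.tsum_lt_tsum hfi (F_snoc_le_even hq a) hlt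
    rw [h1, hPhi] at hslt
    exact lt_irrefl _ hslt

/-- For `q` of odd length with no element of `Z` a prefix of `q`,
the weights after Player 2's possible moves sum to `|A|` times the current weight. -/
lemma sum_F_snoc_odd {Z : Set (List A)} {q : List A} (hq : q.length % 2 = 1)
    (hnp : ∀ p ∈ Z, ¬ p <+: q) (p : Z) :
    ∑ a : A, F Z (q ++ [a]) p = (Fintype.card A : ℝ≥0∞) * F Z q p := by
  by_cases hpre : q <+: (p : List A)
  · have hpq : ¬ (p : List A) <+: q := hnp p p.2
    have hplen : q.length < (p : List A).length := by
      rcases lt_or_eq_of_le hpre.length_le with h | h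
      · exact h
      · exact absurd (hpre.eq_of_length h ▸ List.prefix_refl q) hpq
    obtain ⟨t, ht⟩ := hpre
    have htne : t ≠ [] := by
      intro hh; rw [hh, List.append_nil] at ht; rw [ht] at hplen; omega
    obtain ⟨a₀, t', rfl⟩ : ∃ a₀ t', t = a₀ :: t' := by
      cases t with
      | nil => exact absurd rfl htne
      | cons a t' => exact ⟨a, t', rfl⟩
    have hpre' : q <+: (p : List A) := ⟨a₀ :: t', ht⟩
    have hpre₀ : q ++ [a₀] <+: (p : List A) := ⟨t', by simpa using ht⟩
    have hF₀ : F Z (q ++ [a₀]) p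
        = rr A ^ ((p : List A).length / 2 - q.length / 2 - 1) := by
      simp only [F, if_pos (Or.inl hpre₀)]
      congr 1
      simp only [List.length_append, List.length_singleton]
      omega
    have hFother : ∀ a : A, a ≠ a₀ → F Z (q ++ [a]) p = 0 := by
      intro a ha
      simp only [F]
      rw [if_neg]
      rintro (h | h)
      · have heq := (List.prefix_of_prefix_length_le h hpre₀ (by simp)).eq_of_length (by simp)
        exact ha (by simpa using List.append_cancel_left heq)
      · rcases List.prefix_concat_iff.mp h with h' | h'
        · have hp' : q ++ [a] <+: (p : List A) := h' ▸ List.prefix_refl _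
          have heq := (List.prefix_of_prefix_length_le hp' hpre₀ (by simp)).eq_of_length (by simp)
          exact ha (by simpa using List.append_cancel_left heq)
        · exact hnp p p.2 h'
    have hsum : ∑ a : A, F Z (q ++ [a]) p = F Z (q ++ [a₀]) p :=
      Finset.sum_eq_single a₀ (fun a _ ha => hFother a ha) (by simp)
    rw [hsum, hF₀]
    simp only [F, if_pos (Or.inl hpre')]
    have hk : 1 ≤ (p : List A).length / 2 - q.length / 2 := by omega
    set k := (p : List A).length / 2 - q.length / 2 with hkdef
    have hkk : k - 1 + 1 = k := by omega
    calc rr A ^ (k - 1) = 1 * rr A ^ (k - 1) := (one_mul _).symm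
      _ = ((Fintype.card A : ℝ≥0∞) * rr A) * rr A ^ (k - 1) := by rw [card_mul_rr]
      _ = (Fintype.card A : ℝ≥0∞) * (rr A ^ (k - 1 + 1)) := by rw [pow_succ']; ring
      _ = (Fintype.card A : ℝ≥0∞) * rr A ^ k := by rw [hkk]
  · have hq0 : F Z q p = 0 := by
      simp only [F]
      rw [if_neg]
      rintro (h | h)
      · exact hpre h
      · exact hnp p p.2 h
    have hall0 : ∀ a : A, F Z (q ++ [a]) p = 0 := by
      intro a
      simp only [F]
      rw [if_neg]
      rintro (h | h)
      · exact hpre ((q.prefix_append [a]).trans h)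
      · rcases List.prefix_concat_iff.mp h with h' | h'
        · exact hpre (h' ▸ q.prefix_append [a])
        · exact hnp p p.2 h'
    simp [hall0, hq0]

/-- Claim C : Player 2 has a move preserving the invariant. -/
lemma inv_snoc_odd {Z : Set (List A)} {q : List A} (hq : q.length % 2 = 1)
    (hI : PInv Z q) : ∃ a : A, PInv Z (q ++ [a]) := by
  have hnp : ∀ p ∈ Z, ¬ p <+: q := no_loss hI
  have hsum : ∑ a : A, Phi Z (q ++ [a]) = (Fintype.card A : ℝ≥0∞) * Phi Z q := by
    calc ∑ a : A, Phi Z (q ++ [a])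
        = ∑' p : Z, ∑ a : A, F Z (q ++ [a]) p :=
          (Summable.tsum_finsetSum (fun _ _ => ENNReal.summable)).symm
      _ = ∑' p : Z, (Fintype.card A : ℝ≥0∞) * F Z q p :=
          tsum_congr (sum_F_snoc_odd hq hnp)
      _ = (Fintype.card A : ℝ≥0∞) * Phi Z q := ENNReal.tsum_mul_left
  by_cases hlt : ∃ a : A, Phi Z (q ++ [a]) < 1
  · obtain ⟨a, ha⟩ := hlt
    exact ⟨a, ha.le, fun hh => absurd hh (ne_of_lt ha)⟩
  · push_neg at hlt
    have hPhile : Phi Z q ≤ 1 := hI.1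
    have hcard : (Fintype.card A : ℝ≥0∞) ≤ ∑ a : A, Phi Z (q ++ [a]) := by
      calc (Fintype.card A : ℝ≥0∞) = ∑ _a : A, (1 : ℝ≥0∞) := by simp
        _ ≤ ∑ a : A, Phi Z (q ++ [a]) := Finset.sum_le_sum fun a _ => hlt a
    have hPhi1 : Phi Z q = 1 := by
      by_contra hne
      have h1 : Phi Z q < 1 := lt_of_le_of_ne hPhile hne
      have h2 : ∑ a : A, Phi Z (q ++ [a]) < (Fintype.card A : ℝ≥0∞) := by
        rw [hsum]
        calc (Fintype.card A : ℝ≥0∞) * Phi Z q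
            < (Fintype.card A : ℝ≥0∞) * 1 :=
              ENNReal.mul_lt_mul_right card_ne_zero' card_ne_top' h1
          _ = _ := mul_one _
      exact absurd (hcard.trans_lt h2) (lt_irrefl _)
    have hall1 : ∀ a : A, Phi Z (q ++ [a]) = 1 := by
      intro a
      refine le_antisymm ?_ (hlt a)
      by_contra hgt
      push_neg at hgt
      have hrest : ((Fintype.card A - 1 : ℕ) : ℝ≥0∞)
          ≤ ∑ b ∈ Finset.univ.erase a, Phi Z (q ++ [b]) := by
        calc ((Fintype.card A - 1 : ℕ) : ℝ≥0∞)
            = ∑ _b ∈ Finset.univ.erase a, (1 : ℝ≥0∞) := by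
              rw [Finset.sum_const, Finset.card_erase_of_mem (Finset.mem_univ a)]
              simp only [Finset.card_univ, nsmul_eq_mul, mul_one]
          _ ≤ _ := Finset.sum_le_sum fun b _ => hlt b
      have hsplit : ∑ a : A, Phi Z (q ++ [a])
          = Phi Z (q ++ [a]) + ∑ b ∈ Finset.univ.erase a, Phi Z (q ++ [b]) :=
        (Finset.add_sum_erase _ _ (Finset.mem_univ a)).symm
      have hbig : (Fintype.card A : ℝ≥0∞) < ∑ a : A, Phi Z (q ++ [a]) := by
        rw [hsplit]
        calc (Fintype.card A : ℝ≥0∞)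
            = 1 + ((Fintype.card A - 1 : ℕ) : ℝ≥0∞) := by
              have hc : Fintype.card A = 1 + (Fintype.card A - 1) := by
                have := Fintype.card_pos (α := A); omega
              exact_mod_cast congrArg (Nat.cast : ℕ → ℝ≥0∞) hc
          _ < Phi Z (q ++ [a]) + ((Fintype.card A - 1 : ℕ) : ℝ≥0∞) :=
              ENNReal.add_lt_add_right (ENNReal.natCast_ne_top _) hgt
          _ ≤ Phi Z (q ++ [a]) + ∑ b ∈ Finset.univ.erase a, Phi Z (q ++ [b]) :=
              by gcongr
      rw [hsum, hPhi1, mul_one] at hbig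
      exact lt_irrefl _ hbig
    have hExtInf : (PExt Z q).Infinite := hI.2 hPhi1
    have hsub : PExt Z q ⊆ {q} ∪ ⋃ a : A, PExt Z (q ++ [a]) := by
      rintro p ⟨hpZ, hpre⟩
      by_cases hpq : p = q
      · exact Or.inl (by simp [hpq])
      · obtain ⟨t, ht⟩ := hpre
        have htne : t ≠ [] := by
          intro hh; rw [hh, List.append_nil] at ht; exact hpq ht.symm
        obtain ⟨a₀, t', rfl⟩ : ∃ a₀ t', t = a₀ :: t' := by
          cases t with
          | nil => exact absurd rfl htne
          | cons a t' => exact ⟨a, t', rfl⟩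
        exact Or.inr (Set.mem_iUnion.mpr ⟨a₀, hpZ, ⟨t', by simpa using ht⟩⟩)
    have hexa : ∃ a : A, (PExt Z (q ++ [a])).Infinite := by
      by_contra hfin
      push_neg at hfin
      have hfin2 : ({q} ∪ ⋃ a : A, PExt Z (q ++ [a]) : Set (List A)).Finite :=
        (Set.finite_singleton q).union (Set.finite_iUnion hfin)
      exact hExtInf (hfin2.subset hsub)
    obtain ⟨a, ha⟩ := hexa
    exact ⟨a, (hall1 a).le, fun _ => ha⟩

end Aux

/-- If `Z` is infinite and `∑'_{p ∈ Z} (1/|A|)^⌊len(p)/2⌋ ≤ 1`, then Player 2 has a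
winning strategy. -/
theorem infinite_sum_le_one_imp_player2_wins [Fintype A] [Nonempty A] (Z : Set (List A))
    (hinf : Z.Infinite)
    (h : ∑' p : Z, ((1 : ℝ≥0∞) / Fintype.card A) ^ (p.1.length / 2) ≤ 1) :
    P2Wins Z := by
  classical
  refine ⟨fun q => if hq : ∃ a : A, PInv Z (q ++ [a]) then hq.choose else Classical.arbitrary A,
    fun x hx hwin => ?_⟩
  have hPhi0 : Phi Z ([] : List A)
      = ∑' p : Z, ((1 : ℝ≥0∞) / Fintype.card A) ^ (p.1.length / 2) := by
    apply tsum_congr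
    intro p
    simp [F, rr, List.nil_prefix]
  have hInv0 : PInv Z ([] : List A) := by
    refine ⟨hPhi0 ▸ h, fun _ => ?_⟩
    exact hinf.mono fun p hp => ⟨hp, List.nil_prefix⟩
  have hInv : ∀ n : ℕ, PInv Z (List.ofFn fun i : Fin n => x i) := by
    intro n
    induction n with
    | zero => simpa using hInv0
    | succ n ih =>
      have hsnoc : (List.ofFn fun i : Fin (n + 1) => x i)
          = (List.ofFn fun i : Fin n => x i) ++ [x n] := by
        rw [List.ofFn_succ']
        simp [List.concat_eq_append]
      have hlen : (List.ofFn fun i : Fin n => x i).length = n := by simp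
      rcases Nat.even_or_odd n with he | ho
      · rw [hsnoc]
        exact inv_snoc_even (by rw [hlen]; exact Nat.even_iff.mp he) ih (x n)
      · obtain ⟨m, rfl⟩ := ho
        have hxs : x (2 * m + 1) = (fun q =>
            if hq : ∃ a : A, PInv Z (q ++ [a]) then hq.choose else Classical.arbitrary A)
            (List.ofFn fun i : Fin (2 * m + 1) => x i) := hx m
        have hex : ∃ a : A, PInv Z ((List.ofFn fun i : Fin (2 * m + 1) => x i) ++ [a]) :=
          inv_snoc_odd (by rw [hlen]; omega) ih
        rw [hsnoc, hxs]
        simp only [dif_pos hex]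
        exact hex.choose_spec
  obtain ⟨p, hpZ, hpre⟩ := hwin
  have hpp : p <+: (List.ofFn fun i : Fin p.length => x i) := by
    rw [hpre]
  exact no_loss (hInv p.length) p hpZ hpp
end

section
/- Let A be a finite nonempty alphabet and let Z be a set of positions over A. Form the signed alphabet A± = A × {+1, −1}; a signed word is reduced if it contains no two consecutive letters of the form (a, ε)(a, −ε), and a signed play is an infinite sequence over A± all of whose finite prefixes are reduced. Consider the game on the tree T' of reduced signed words, where a strategy of Player 1 (resp. Player 2) assigns to every even-length (resp. odd-length) reduced signed word a signed letter whose appending keeps the word reduced, and the lifted winning set W' consists of all signed plays having a finite prefix whose projection to A (forgetting signs) belongs to Z. Then Player 1 has a winning strategy for Z in the game on the full tree over A if and only if Player 1 has a winning strategy in the game (T', W'). -/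
open scoped ENNReal

variable {A : Type*}

/-- A signed word over `A × Bool` is reduced if no two consecutive letters are of the
form `(a, ε)(a, ¬ε)`. -/
def Reduced (w : List (A × Bool)) : Prop :=
  w.Chain' fun u v => u.1 = v.1 → u.2 = v.2

section AuxLemmas

attribute [local instance] Classical.propDecidable

/-- Default sign keeping a signed word reduced after appending letter `a`. -/
noncomputable def dsign (w : List (A × Bool)) (a : A) : Bool :=
  match w.getLast? with
  | some u => if u.1 = a then u.2 else true
  | none => true

lemma reduced_snoc_dsign {w : List (A × Bool)} (hw : Reduced w) (a : A) :
    Reduced (w ++ [(a, dsign w a)]) := by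
  show List.IsChain _ _
  rw [List.isChain_append]
  refine ⟨hw, List.isChain_singleton _, ?_⟩
  intro u hu v hv h
  simp only [List.head?_cons, Option.mem_def, Option.some.injEq] at hv
  subst hv
  simp only at h ⊢
  have hd : dsign w a = if u.1 = a then u.2 else true := by
    unfold dsign
    simp only [Option.mem_def] at hu
    rw [hu]
  rw [hd, if_pos h]

noncomputable def step (s : List (A × Bool) → A × Bool) (w : List (A × Bool)) (a : A) :
    A × Bool :=
  if Even w.length ∧ (s w).1 = a then s w else (a, dsign w a)

lemma step_fst (s : List (A × Bool) → A × Bool) (w : List (A × Bool)) (a : A) :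
    (step s w a).1 = a := by
  unfold step
  split
  · next h => exact h.2
  · rfl

noncomputable def liftPos (s : List (A × Bool) → A × Bool) (p : List A) :
    List (A × Bool) :=
  p.foldl (fun w a => w ++ [step s w a]) []

lemma liftPos_snoc (s : List (A × Bool) → A × Bool) (p : List A) (a : A) :
    liftPos s (p ++ [a]) = liftPos s p ++ [step s (liftPos s p) a] := by
  simp [liftPos, List.foldl_append]

lemma ofFn_snoc {B : Type*} (x : ℕ → B) (n : ℕ) :
    (List.ofFn fun i : Fin (n + 1) => x i) =
      (List.ofFn fun i : Fin n => x i) ++ [x n] := by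
  rw [List.ofFn_succ']
  simp [List.concat_eq_append]

lemma prefixOfPlay_ofFn (x : ℕ → A) (n : ℕ) :
    PrefixOfPlay (List.ofFn fun i : Fin n => x i) x := by
  unfold PrefixOfPlay
  apply List.ext_getElem <;> simp

end AuxLemmas

/-- Player 1 has a winning strategy for `Z` on the full tree over `A` iff she has a
winning strategy in the lifted game on the tree of reduced signed words, where the
winning set consists of signed plays having a finite prefix projecting into `Z`. -/
theorem player1_wins_iff_wins_lifted [Fintype A] [Nonempty A] (Z : Set (List A)) :
    P1Wins Z ↔
      ∃ s₁ : List (A × Bool) → A × Bool,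
        (∀ w : List (A × Bool), Reduced w → Even w.length → Reduced (w ++ [s₁ w])) ∧
        ∀ y : ℕ → A × Bool,
          (∀ n : ℕ, Reduced (List.ofFn fun i : Fin n => y i)) →
          (∀ n : ℕ, y (2 * n) = s₁ (List.ofFn fun i : Fin (2 * n) => y i)) →
          ∃ n : ℕ, (List.ofFn fun i : Fin n => y i).map Prod.fst ∈ Z := by
  constructor
  · rintro ⟨s₁, hs⟩
    refine ⟨fun w => (s₁ (w.map Prod.fst), dsign w (s₁ (w.map Prod.fst))), ?_, ?_⟩
    · intro w hw _
      exact reduced_snoc_dsign hw _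
    · intro y _ hy
      set x : ℕ → A := fun n => (y n).1 with hxdef
      have hproj : ∀ n, (List.ofFn fun i : Fin n => y i).map Prod.fst
          = List.ofFn fun i : Fin n => x i := by
        intro n
        simp only [List.map_ofFn]
        rfl
      have hcons : Consistent1 (fun p => s₁ p) x := by
        intro n
        have h := hy n
        calc x (2 * n) = (y (2 * n)).1 := rfl
          _ = s₁ ((List.ofFn fun i : Fin (2 * n) => y i).map Prod.fst) := by rw [h]
          _ = _ := by rw [hproj]
      obtain ⟨p, hpZ, hpx⟩ := hs x hcons
      refine ⟨p.length, ?_⟩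
      rw [hproj, hpx]
      exact hpZ
  · rintro ⟨s', h1, h2⟩
    refine ⟨fun p => (s' (liftPos s' p)).1, ?_⟩
    intro x hx
    set w : ℕ → List (A × Bool) :=
      fun n => liftPos s' (List.ofFn fun i : Fin n => x i) with hwdef
    set y : ℕ → A × Bool := fun n => step s' (w n) (x n) with hydef
    have key : ∀ n, (List.ofFn fun i : Fin n => y i) = w n ∧ Reduced (w n) ∧
        (w n).length = n ∧ (w n).map Prod.fst = (List.ofFn fun i : Fin n => x i) := by
      intro n
      induction n with
      | zero =>
        refine ⟨?_, ?_, ?_, ?_⟩ <;> simp [hwdef, liftPos, Reduced, List.Chain']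
      | succ n ih =>
        obtain ⟨ihy, ihr, ihl, ihp⟩ := ih
        have hsnoc : w (n + 1) = w n ++ [y n] := by
          show liftPos s' (List.ofFn fun i : Fin (n + 1) => x i) = _
          rw [ofFn_snoc, liftPos_snoc]
        refine ⟨?_, ?_, ?_, ?_⟩
        · rw [ofFn_snoc, ihy, hsnoc]
        · rw [hsnoc]
          show Reduced (w n ++ [step s' (w n) (x n)])
          unfold step
          split
          · next h => exact h1 _ ihr h.1
          · exact reduced_snoc_dsign ihr _
        · rw [hsnoc]
          simp [ihl]
        · rw [hsnoc, ofFn_snoc]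
          have : (y n).1 = x n := step_fst s' (w n) (x n)
          simp [ihp, this]
    have hyred : ∀ n, Reduced (List.ofFn fun i : Fin n => y i) := fun n =>
      (key n).1 ▸ (key n).2.1
    have hycons : ∀ n, y (2 * n) = s' (List.ofFn fun i : Fin (2 * n) => y i) := by
      intro n
      rw [(key (2 * n)).1]
      have heven : Even (w (2 * n)).length := by
        rw [(key (2 * n)).2.2.1]; exact even_two_mul n
      have hfst : (s' (w (2 * n))).1 = x (2 * n) := (hx n).symm
      show step s' (w (2 * n)) (x (2 * n)) = s' (w (2 * n))
      unfold step
      rw [if_pos ⟨heven, hfst⟩]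
    obtain ⟨n, hn⟩ := h2 y hyred hycons
    rw [(key n).1, (key n).2.2.2] at hn
    exact ⟨_, hn, prefixOfPlay_ofFn x n⟩
end
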